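/- Define D(N) = N·D*_N(Y₂) for the binary van der Corput sequence Y₂. Then D(1) = 1, and for all N ∈ ℕ: D(2N) = D(N) and D(2N+1) = (D(N) + D(N+1) + 1)/2. -/

import Mathlib

open scoped Classical
open Filter

/-- The b-adic radical inverse (van der Corput) function. -/
noncomputable def vdc (b n : ℕ) : ℝ :=
  ∑ j ∈ Finset.range (n + 1), ((n / b ^ j % b : ℕ) : ℝ) / (b : ℝ) ^ (j + 1)

/-- The star discrepancy of the first `N` terms of a sequence in `[0,1)`. -/
noncomputable def dstar (x : ℕ → ℝ) (N : ℕ) : ℝ :=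
  ⨆ t : Set.Icc (0 : ℝ) 1,
    |(((Finset.range N).filter (fun n => x n ∈ Set.Ico (0 : ℝ) (t : ℝ))).card : ℝ) / N - (t : ℝ)|

/-- `D(N) := N D*_N(Y₂)`. -/
noncomputable def Dvdc (N : ℕ) : ℝ := (N : ℝ) * dstar (vdc 2) N


lemma vdc_nonneg (b n : ℕ) : 0 ≤ vdc b n := by
  apply Finset.sum_nonneg
  intro j _
  positivity

lemma vdc_sum_ext (n : ℕ) {m : ℕ} (h : n + 1 ≤ m) :
    vdc 2 n = ∑ j ∈ Finset.range m, ((n / 2 ^ j % 2 : ℕ) : ℝ) / (2 : ℝ) ^ (j + 1) := by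
  unfold vdc
  push_cast
  apply Finset.sum_subset (Finset.range_subset_range.2 h)
  intro j hj hj'
  simp only [Finset.mem_range, not_lt] at hj'
  have : n / 2 ^ j = 0 := Nat.div_eq_of_lt (lt_of_lt_of_le (Nat.lt_two_pow_self (n := n))
    (Nat.pow_le_pow_right (by norm_num) (le_trans (Nat.le_succ n) hj')))
  simp [this]

lemma geom_half (n : ℕ) : ∑ j ∈ Finset.range n, ((1:ℝ)/2) ^ (j+1) = 1 - (1/2)^n := by
  induction n with
  | zero => norm_num
  | succ k ih => rw [Finset.sum_range_succ, ih]; ring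

lemma vdc_two_lt_one (n : ℕ) : vdc 2 n < 1 := by
  have h1 : vdc 2 n ≤ ∑ j ∈ Finset.range (n+1), ((1:ℝ)/2) ^ (j+1) := by
    apply Finset.sum_le_sum
    intro j _
    have hd : (n / 2 ^ j % 2 : ℕ) ≤ 1 := Nat.lt_succ_iff.mp (Nat.mod_lt _ (by norm_num))
    have : ((n / 2 ^ j % 2 : ℕ) : ℝ) ≤ 1 := by exact_mod_cast hd
    rw [div_pow, one_pow]
    rw [div_le_div_iff₀ (by positivity) (by positivity)]
    nlinarith [pow_pos (by norm_num : (0:ℝ) < 2) (j+1)]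
  have h2 := geom_half (n+1)
  have h3 : (0:ℝ) < (1/2)^(n+1) := by positivity
  linarith

lemma vdc_two_zero : vdc 2 0 = 0 := by simp [vdc]

lemma vdc_two_even (k : ℕ) : vdc 2 (2 * k) = vdc 2 k / 2 := by
  rcases Nat.eq_zero_or_pos k with hk | hk
  · simp [hk, vdc_two_zero, vdc]
  have h1 : vdc 2 (2 * k) = ∑ j ∈ Finset.range (2*k+1),
      ((2*k / 2 ^ j % 2 : ℕ) : ℝ) / (2 : ℝ) ^ (j + 1) := rfl
  rw [h1, Finset.sum_range_succ']
  have e0 : ((2*k / 2 ^ 0 % 2 : ℕ) : ℝ) / (2 : ℝ) ^ (0 + 1) = 0 := by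
    simp [Nat.mul_mod_right]
  rw [e0, add_zero]
  have e1 : ∀ j, ((2*k / 2 ^ (j+1) % 2 : ℕ) : ℝ) / (2 : ℝ) ^ (j + 1 + 1)
      = (((k / 2 ^ j % 2 : ℕ) : ℝ) / (2 : ℝ) ^ (j + 1)) / 2 := by
    intro j
    have : 2 * k / 2 ^ (j+1) = k / 2 ^ j := by
      rw [pow_succ', Nat.mul_div_mul_left _ _ (by norm_num)]
    rw [this]
    ring
  calc (∑ j ∈ Finset.range (2*k), ((2*k / 2 ^ (j+1) % 2 : ℕ) : ℝ) / (2 : ℝ) ^ (j + 1 + 1))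
      = ∑ j ∈ Finset.range (2*k), (((k / 2 ^ j % 2 : ℕ) : ℝ) / (2 : ℝ) ^ (j + 1)) / 2 := by
        exact Finset.sum_congr rfl (fun j _ => e1 j)
    _ = (∑ j ∈ Finset.range (2*k), ((k / 2 ^ j % 2 : ℕ) : ℝ) / (2 : ℝ) ^ (j + 1)) / 2 := by
        rw [Finset.sum_div]
    _ = vdc 2 k / 2 := by rw [← vdc_sum_ext k (by omega)]

lemma vdc_two_odd (k : ℕ) : vdc 2 (2 * k + 1) = 1/2 + vdc 2 k / 2 := by
  have h1 : vdc 2 (2 * k + 1) = ∑ j ∈ Finset.range (2*k+1+1),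
      (((2*k+1) / 2 ^ j % 2 : ℕ) : ℝ) / (2 : ℝ) ^ (j + 1) := rfl
  rw [h1, Finset.sum_range_succ']
  have e0 : (((2*k+1) / 2 ^ 0 % 2 : ℕ) : ℝ) / (2 : ℝ) ^ (0 + 1) = 1/2 := by
    simp [Nat.mul_add_mod]
  rw [e0]
  have e1 : ∀ j, (((2*k+1) / 2 ^ (j+1) % 2 : ℕ) : ℝ) / (2 : ℝ) ^ (j + 1 + 1)
      = (((k / 2 ^ j % 2 : ℕ) : ℝ) / (2 : ℝ) ^ (j + 1)) / 2 := by
    intro j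
    have : (2*k+1) / 2 ^ (j+1) = k / 2 ^ j := by
      rw [pow_succ', ← Nat.div_div_eq_div_mul]
      congr 1
      omega
    rw [this]
    ring
  calc (∑ j ∈ Finset.range (2*k+1), (((2*k+1) / 2 ^ (j+1) % 2 : ℕ) : ℝ) / (2 : ℝ) ^ (j + 1 + 1)) + 1/2
      = (∑ j ∈ Finset.range (2*k+1), (((k / 2 ^ j % 2 : ℕ) : ℝ) / (2 : ℝ) ^ (j + 1)) / 2) + 1/2 := by
        rw [Finset.sum_congr rfl (fun j _ => e1 j)]
    _ = (∑ j ∈ Finset.range (2*k+1), ((k / 2 ^ j % 2 : ℕ) : ℝ) / (2 : ℝ) ^ (j + 1)) / 2 + 1/2 := by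
        rw [Finset.sum_div]
    _ = 1/2 + vdc 2 k / 2 := by rw [← vdc_sum_ext k (by omega)]; ring

noncomputable def AcntN (N : ℕ) (t : ℝ) : ℕ :=
  ((Finset.range N).filter (fun n => vdc 2 n ∈ Set.Ico (0 : ℝ) t)).card

lemma mem_Ico_iff (n : ℕ) (t : ℝ) : vdc 2 n ∈ Set.Ico (0 : ℝ) t ↔ vdc 2 n < t := by
  simp [Set.mem_Ico, vdc_nonneg]

lemma AcntN_succ (N : ℕ) (t : ℝ) :
    AcntN (N + 1) t = AcntN N t + (if vdc 2 N < t then 1 else 0) := by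
  unfold AcntN
  rw [Finset.range_add_one, Finset.filter_insert]
  by_cases h : vdc 2 N < t
  · rw [if_pos ((mem_Ico_iff N t).2 h), if_pos h,
      Finset.card_insert_of_notMem (by simp)]
  · rw [if_neg (fun hm => h ((mem_Ico_iff N t).1 hm)), if_neg h, add_zero]

lemma AcntN_zero (t : ℝ) : AcntN 0 t = 0 := by simp [AcntN]

lemma AcntN_even_lo (m : ℕ) {t : ℝ} (h : t ≤ 1/2) :
    AcntN (2 * m) t = AcntN m (2 * t) := by
  induction m with
  | zero => simp [AcntN_zero]
  | succ k ih =>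
    have h2 : 2 * (k + 1) = (2 * k + 1) + 1 := by ring
    rw [h2, AcntN_succ, AcntN_succ, AcntN_succ, ih]
    have ho : ¬ (vdc 2 (2 * k + 1) < t) := by
      rw [vdc_two_odd]
      have := vdc_nonneg 2 k
      intro hc; linarith
    have he : (vdc 2 (2 * k) < t) ↔ (vdc 2 k < 2 * t) := by
      rw [vdc_two_even]; constructor <;> intro hc <;> linarith
    rw [if_neg ho]
    by_cases hk : vdc 2 k < 2 * t
    · rw [if_pos (he.2 hk), if_pos hk]
    · rw [if_neg (fun hc => hk (he.1 hc)), if_neg hk]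

lemma AcntN_odd_lo (m : ℕ) {t : ℝ} (h : t ≤ 1/2) :
    AcntN (2 * m + 1) t = AcntN (m + 1) (2 * t) := by
  rw [AcntN_succ, AcntN_succ, AcntN_even_lo m h]
  have he : (vdc 2 (2 * m) < t) ↔ (vdc 2 m < 2 * t) := by
    rw [vdc_two_even]; constructor <;> intro hc <;> linarith
  by_cases hk : vdc 2 m < 2 * t
  · rw [if_pos (he.2 hk), if_pos hk]
  · rw [if_neg (fun hc => hk (he.1 hc)), if_neg hk]

lemma AcntN_even_hi (m : ℕ) {t : ℝ} (h : 1/2 ≤ t) :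
    AcntN (2 * m) t = m + AcntN m (2 * t - 1) := by
  induction m with
  | zero => simp [AcntN_zero]
  | succ k ih =>
    have h2 : 2 * (k + 1) = (2 * k + 1) + 1 := by ring
    rw [h2, AcntN_succ, AcntN_succ, AcntN_succ, ih]
    have he : vdc 2 (2 * k) < t := by
      rw [vdc_two_even]
      have := vdc_two_lt_one k
      linarith
    have ho : (vdc 2 (2 * k + 1) < t) ↔ (vdc 2 k < 2 * t - 1) := by
      rw [vdc_two_odd]; constructor <;> intro hc <;> linarith
    rw [if_pos he]
    by_cases hk : vdc 2 k < 2 * t - 1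
    · rw [if_pos (ho.2 hk), if_pos hk]; ring
    · rw [if_neg (fun hc => hk (ho.1 hc)), if_neg hk]; ring

lemma AcntN_odd_hi (m : ℕ) {t : ℝ} (h : 1/2 ≤ t) :
    AcntN (2 * m + 1) t = (m + 1) + AcntN m (2 * t - 1) := by
  rw [AcntN_succ, AcntN_even_hi m h]
  have he : vdc 2 (2 * m) < t := by
    rw [vdc_two_even]
    have := vdc_two_lt_one m
    linarith
  rw [if_pos he]
  ring

lemma AcntN_le (N : ℕ) (t : ℝ) : AcntN N t ≤ N := by
  unfold AcntN
  exact le_trans (Finset.card_filter_le _ _) (by simp)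

noncomputable def Δvdc (N : ℕ) (t : ℝ) : ℝ := (AcntN N t : ℝ) - N * t

lemma Δvdc_zero (t : ℝ) : Δvdc 0 t = 0 := by simp [Δvdc, AcntN_zero]

lemma Δvdc_succ (N : ℕ) (t : ℝ) :
    Δvdc (N + 1) t = Δvdc N t + (if vdc 2 N < t then 1 else 0) - t := by
  unfold Δvdc
  rw [AcntN_succ]
  by_cases h : vdc 2 N < t <;> simp [h] <;> push_cast <;> ring

lemma Δvdc_even_lo (m : ℕ) {t : ℝ} (h : t ≤ 1/2) : Δvdc (2*m) t = Δvdc m (2*t) := by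
  unfold Δvdc; rw [AcntN_even_lo m h]; push_cast; ring

lemma Δvdc_odd_lo (m : ℕ) {t : ℝ} (h : t ≤ 1/2) :
    Δvdc (2*m+1) t = Δvdc (m+1) (2*t) + t := by
  unfold Δvdc; rw [AcntN_odd_lo m h]; push_cast; ring

lemma Δvdc_even_hi (m : ℕ) {t : ℝ} (h : 1/2 ≤ t) : Δvdc (2*m) t = Δvdc m (2*t-1) := by
  unfold Δvdc; rw [AcntN_even_hi m h]; push_cast; ring

lemma Δvdc_odd_hi (m : ℕ) {t : ℝ} (h : 1/2 ≤ t) :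
    Δvdc (2*m+1) t = Δvdc m (2*t-1) + (1 - t) := by
  unfold Δvdc; rw [AcntN_odd_hi m h]; push_cast; ring

lemma Δvdc_one (t : ℝ) : Δvdc 1 t = (if 0 < t then (1:ℝ) else 0) - t := by
  rw [show (1:ℕ) = 0 + 1 from rfl, Δvdc_succ, Δvdc_zero, vdc_two_zero, zero_add]

lemma Δvdc_nonneg : ∀ N : ℕ, ∀ t ∈ Set.Icc (0:ℝ) 1, 0 ≤ Δvdc N t := by
  intro N
  induction N using Nat.strong_induction_on with
  | _ N ih =>
    intro t ht
    obtain ⟨ht0, ht1⟩ := ht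
    match N with
    | 0 => rw [Δvdc_zero]
    | 1 =>
      rw [Δvdc_one]
      by_cases h : 0 < t
      · rw [if_pos h]; linarith
      · rw [if_neg h]; push_neg at h; linarith
    | (N+2) =>
      rcases Nat.even_or_odd (N+2) with ⟨m, hm⟩ | ⟨m, hm⟩
      · have hm' : N + 2 = 2 * m := by omega
        have hmlt : m < N + 2 := by omega
        rw [hm']
        rcases le_or_gt t (1/2) with h | h
        · rw [Δvdc_even_lo m h]
          exact ih m hmlt _ ⟨by linarith, by linarith⟩
        · rw [Δvdc_even_hi m h.le]
          exact ih m hmlt _ ⟨by linarith, by linarith⟩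
      · have hm' : N + 2 = 2 * m + 1 := by omega
        have hm1 : 1 ≤ m := by omega
        rw [hm']
        rcases le_or_gt t (1/2) with h | h
        · rw [Δvdc_odd_lo m h]
          have := ih (m+1) (by omega) (2*t) ⟨by linarith, by linarith⟩
          linarith
        · rw [Δvdc_odd_hi m h.le]
          have := ih m (by omega) (2*t-1) ⟨by linarith, by linarith⟩
          linarith

lemma Δvdc_le (N : ℕ) {t : ℝ} (h : 0 ≤ t) : Δvdc N t ≤ N := by
  unfold Δvdc
  have h1 : (AcntN N t : ℝ) ≤ N := by exact_mod_cast AcntN_le N t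
  nlinarith [Nat.cast_nonneg (α := ℝ) N]

instance : Nonempty (Set.Icc (0:ℝ) 1) := ⟨⟨0, by norm_num⟩⟩

lemma bddI (f : ℝ → ℝ) (C : ℝ) (hC : ∀ t ∈ Set.Icc (0:ℝ) 1, f t ≤ C) :
    BddAbove (Set.range fun s : Set.Icc (0:ℝ) 1 => f s) := by
  refine ⟨C, ?_⟩
  rintro x ⟨s, rfl⟩
  exact hC s s.2

lemma half_mem {s : ℝ} (hs : s ∈ Set.Icc (0:ℝ) 1) : s/2 ∈ Set.Icc (0:ℝ) 1 := by
  obtain ⟨h0, h1⟩ := hs; constructor <;> linarith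

lemma half_mem' {s : ℝ} (hs : s ∈ Set.Icc (0:ℝ) 1) : (s+1)/2 ∈ Set.Icc (0:ℝ) 1 := by
  obtain ⟨h0, h1⟩ := hs; constructor <;> linarith

lemma sup_split (f : ℝ → ℝ) (C : ℝ) (hC : ∀ t ∈ Set.Icc (0:ℝ) 1, f t ≤ C) :
    (⨆ t : Set.Icc (0:ℝ) 1, f t)
      = max (⨆ s : Set.Icc (0:ℝ) 1, f (s/2)) (⨆ s : Set.Icc (0:ℝ) 1, f ((s+1)/2)) := by
  have b0 : BddAbove (Set.range fun t : Set.Icc (0:ℝ) 1 => f t) := bddI f C hC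
  have b1 : BddAbove (Set.range fun s : Set.Icc (0:ℝ) 1 => f (s/2)) :=
    bddI (fun s => f (s/2)) C (fun s hs => hC _ (half_mem hs))
  have b2 : BddAbove (Set.range fun s : Set.Icc (0:ℝ) 1 => f ((s+1)/2)) :=
    bddI (fun s => f ((s+1)/2)) C (fun s hs => hC _ (half_mem' hs))
  apply le_antisymm
  · apply ciSup_le
    intro t
    rcases le_or_gt (t:ℝ) (1/2) with h | h
    · apply le_max_of_le_left
      have hm : (2 * (t:ℝ)) ∈ Set.Icc (0:ℝ) 1 := ⟨by have := t.2.1; linarith, by linarith⟩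
      have := le_ciSup b1 ⟨2 * (t:ℝ), hm⟩
      simpa [mul_div_assoc] using this
    · apply le_max_of_le_right
      have hm : (2 * (t:ℝ) - 1) ∈ Set.Icc (0:ℝ) 1 :=
        ⟨by linarith, by have := t.2.2; linarith⟩
      have := le_ciSup b2 ⟨2 * (t:ℝ) - 1, hm⟩
      have e : ((2 * (t:ℝ) - 1) + 1)/2 = (t:ℝ) := by ring
      rw [e] at this
      exact this
  · apply max_le
    · apply ciSup_le
      intro s
      exact le_ciSup b0 ⟨(s:ℝ)/2, half_mem s.2⟩
    · apply ciSup_le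
      intro s
      exact le_ciSup b0 ⟨((s:ℝ)+1)/2, half_mem' s.2⟩

lemma sup_max (f g : ℝ → ℝ) (C : ℝ) (hf : ∀ t ∈ Set.Icc (0:ℝ) 1, f t ≤ C)
    (hg : ∀ t ∈ Set.Icc (0:ℝ) 1, g t ≤ C) :
    (⨆ s : Set.Icc (0:ℝ) 1, max (f s) (g s))
      = max (⨆ s : Set.Icc (0:ℝ) 1, f s) (⨆ s : Set.Icc (0:ℝ) 1, g s) := by
  have bf := bddI f C hf
  have bg := bddI g C hg
  apply le_antisymm
  · apply ciSup_le
    intro s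
    rcases max_cases (f s) (g s) with ⟨he, _⟩ | ⟨he, _⟩
    · rw [he]; exact le_max_of_le_left (le_ciSup bf s)
    · rw [he]; exact le_max_of_le_right (le_ciSup bg s)
  · have bm : BddAbove (Set.range fun s : Set.Icc (0:ℝ) 1 => max (f s) (g s)) :=
      bddI (fun s => max (f s) (g s)) C (fun s hs => max_le (hf s hs) (hg s hs))
    apply max_le
    · exact ciSup_le fun s => le_trans (le_max_left _ _) (le_ciSup bm s)
    · exact ciSup_le fun s => le_trans (le_max_right _ _) (le_ciSup bm s)

lemma sup_add_const (f : ℝ → ℝ) (c C : ℝ) (hf : ∀ t ∈ Set.Icc (0:ℝ) 1, f t ≤ C) :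
    (⨆ s : Set.Icc (0:ℝ) 1, (f s + c)) = (⨆ s : Set.Icc (0:ℝ) 1, f s) + c := by
  have bf := bddI f C hf
  have bfc : BddAbove (Set.range fun s : Set.Icc (0:ℝ) 1 => f s + c) :=
    bddI (fun s => f s + c) (C + c) (fun s hs => by have := hf s hs; show f s + c ≤ C + c; linarith)
  apply le_antisymm
  · exact ciSup_le fun s => add_le_add_left (le_ciSup bf s) c
  · have h : (⨆ s : Set.Icc (0:ℝ) 1, f s) ≤ (⨆ s : Set.Icc (0:ℝ) 1, (f s + c)) - c := by
      apply ciSup_le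
      intro s
      have := le_ciSup bfc s
      linarith
    linarith

lemma sup_reduce (f g : ℝ → ℝ) (C : ℝ) (hC : ∀ t ∈ Set.Icc (0:ℝ) 1, f t ≤ C)
    (h1 : ∀ s : Set.Icc (0:ℝ) 1, max (f (s/2)) (f ((s+1)/2)) = g s) :
    (⨆ t : Set.Icc (0:ℝ) 1, f t) = ⨆ s : Set.Icc (0:ℝ) 1, g s := by
  rw [sup_split f C hC,
    ← sup_max (fun s => f (s/2)) (fun s => f ((s+1)/2)) C
      (fun s hs => hC _ (half_mem hs)) (fun s hs => hC _ (half_mem' hs))]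
  exact iSup_congr h1

noncomputable def Msup (N : ℕ) : ℝ := ⨆ s : Set.Icc (0:ℝ) 1, Δvdc N s

lemma Msup_even (m : ℕ) : Msup (2 * m) = Msup m := by
  unfold Msup
  apply sup_reduce (Δvdc (2*m)) (Δvdc m) ((2*m : ℕ) : ℝ)
    (fun t ht => Δvdc_le (2*m) ht.1)
  intro s
  obtain ⟨h0, h1⟩ := s.2
  have e1 : Δvdc (2*m) ((s:ℝ)/2) = Δvdc m (s:ℝ) := by
    rw [Δvdc_even_lo m (by linarith : (s:ℝ)/2 ≤ 1/2)]
    congr 1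
    ring
  have e2 : Δvdc (2*m) (((s:ℝ)+1)/2) = Δvdc m (s:ℝ) := by
    rw [Δvdc_even_hi m (by linarith : 1/2 ≤ ((s:ℝ)+1)/2)]
    congr 1
    ring
  rw [e1, e2, max_self]

lemma Msup_odd_of (m : ℕ)
    (h : (⨆ s : Set.Icc (0:ℝ) 1, ((1:ℝ) * Δvdc m s + 1 * Δvdc (m+1) s))
        = 1 * Msup m + 1 * Msup (m+1)) :
    Msup (2*m+1) = (Msup m + Msup (m+1) + 1) / 2 := by
  conv_lhs => rw [Msup]
  have step1 : (⨆ t : Set.Icc (0:ℝ) 1, Δvdc (2*m+1) t)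
      = ⨆ s : Set.Icc (0:ℝ) 1,
          ((1/2) * ((1:ℝ) * Δvdc m s + 1 * Δvdc (m+1) s) + 1/2) := by
    apply sup_reduce (Δvdc (2*m+1))
      (fun s => (1/2) * ((1:ℝ) * Δvdc m s + 1 * Δvdc (m+1) s) + 1/2) (2*m+1)
      (fun t ht => by have := Δvdc_le (2*m+1) ht.1; push_cast at this ⊢; linarith)
    intro s
    obtain ⟨h0, h1⟩ := s.2
    have e1 : Δvdc (2*m+1) ((s:ℝ)/2) = Δvdc (m+1) (s:ℝ) + (s:ℝ)/2 := by
      rw [Δvdc_odd_lo m (by linarith : (s:ℝ)/2 ≤ 1/2)]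
      congr 2
      ring
    have e2 : Δvdc (2*m+1) (((s:ℝ)+1)/2) = Δvdc m (s:ℝ) + (1 - (s:ℝ))/2 := by
      rw [Δvdc_odd_hi m (by linarith : 1/2 ≤ ((s:ℝ)+1)/2)]
      have e : 2 * (((s:ℝ)+1)/2) - 1 = (s:ℝ) := by ring
      rw [e]
      ring
    rw [e1, e2, Δvdc_succ m (s:ℝ)]
    by_cases hχ : vdc 2 m < (s:ℝ)
    · rw [if_pos hχ, max_eq_left (by linarith)]
      ring
    · rw [if_neg hχ, max_eq_right (by linarith)]
      ring
  rw [step1,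
    sup_add_const (fun s => (1/2) * ((1:ℝ) * Δvdc m s + 1 * Δvdc (m+1) s)) (1/2)
      ((m + (m+1)) / 2)
      (fun t ht => by
        have h1 := Δvdc_le m ht.1
        have h2 := Δvdc_le (m+1) ht.1
        push_cast at h2 ⊢
        linarith),
    ← Real.mul_iSup_of_nonneg (by norm_num : (0:ℝ) ≤ 1/2), h]
  ring

lemma Msup_zero : Msup 0 = 0 := by
  unfold Msup
  simp only [Δvdc_zero]
  exact ciSup_const

lemma masterL : ∀ N : ℕ, ∀ a b : ℝ, 0 ≤ a → 0 ≤ b →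
    (⨆ s : Set.Icc (0:ℝ) 1, (a * Δvdc N s + b * Δvdc (N+1) s))
      = a * Msup N + b * Msup (N+1) := by
  intro N
  induction N using Nat.strong_induction_on with
  | _ N ih =>
  intro a b ha hb
  match N with
  | 0 =>
    have e : ∀ s : Set.Icc (0:ℝ) 1,
        a * Δvdc 0 s + b * Δvdc 1 s = b * Δvdc 1 s := by
      intro s; rw [Δvdc_zero]; ring
    rw [iSup_congr e, ← Real.mul_iSup_of_nonneg hb, Msup_zero]
    rw [show (⨆ s : Set.Icc (0:ℝ) 1, Δvdc 1 s) = Msup 1 from rfl]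
    ring
  | (N'+1) =>
    rcases Nat.even_or_odd (N'+1) with ⟨m, hm⟩ | ⟨m, hm⟩
    · -- even case : N'+1 = 2m, m ≥ 1
      have hm' : N' + 1 = 2 * m := by omega
      have hm1 : 1 ≤ m := by omega
      rw [hm'] at ih ⊢
      have hlt : m < 2 * m := by omega
      have step1 : (⨆ s : Set.Icc (0:ℝ) 1, (a * Δvdc (2*m) s + b * Δvdc (2*m+1) s))
          = ⨆ s : Set.Icc (0:ℝ) 1,
              (((a+b/2) * Δvdc m s + (b/2) * Δvdc (m+1) s) + b/2) := by
        apply sup_reduce (fun t => a * Δvdc (2*m) t + b * Δvdc (2*m+1) t)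
          (fun s => ((a+b/2) * Δvdc m s + (b/2) * Δvdc (m+1) s) + b/2)
          (a * ((2*m : ℕ) : ℝ) + b * ((2*m+1 : ℕ) : ℝ))
          (fun t ht => add_le_add
            (mul_le_mul_of_nonneg_left (Δvdc_le (2*m) ht.1) ha)
            (mul_le_mul_of_nonneg_left (Δvdc_le (2*m+1) ht.1) hb))
        intro s
        obtain ⟨h0, h1⟩ := s.2
        have e1 : Δvdc (2*m) ((s:ℝ)/2) = Δvdc m (s:ℝ) := by
          rw [Δvdc_even_lo m (by linarith : (s:ℝ)/2 ≤ 1/2)]; congr 1; ring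
        have e2 : Δvdc (2*m+1) ((s:ℝ)/2) = Δvdc (m+1) (s:ℝ) + (s:ℝ)/2 := by
          rw [Δvdc_odd_lo m (by linarith : (s:ℝ)/2 ≤ 1/2)]; congr 2; ring
        have e3 : Δvdc (2*m) (((s:ℝ)+1)/2) = Δvdc m (s:ℝ) := by
          rw [Δvdc_even_hi m (by linarith : 1/2 ≤ ((s:ℝ)+1)/2)]; congr 1; ring
        have e4 : Δvdc (2*m+1) (((s:ℝ)+1)/2) = Δvdc m (s:ℝ) + (1 - (s:ℝ))/2 := by
          rw [Δvdc_odd_hi m (by linarith : 1/2 ≤ ((s:ℝ)+1)/2)]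
          have e : 2 * (((s:ℝ)+1)/2) - 1 = (s:ℝ) := by ring
          rw [e]; ring
        rw [e1, e2, e3, e4, Δvdc_succ m (s:ℝ)]
        by_cases hχ : vdc 2 m < (s:ℝ)
        · rw [if_pos hχ, max_eq_left (by nlinarith)]; ring
        · rw [if_neg hχ, max_eq_right (by nlinarith)]; ring
      rw [step1,
        sup_add_const (fun s => (a+b/2) * Δvdc m s + (b/2) * Δvdc (m+1) s) (b/2)
          ((a+b/2) * (m : ℝ) + (b/2) * ((m+1 : ℕ) : ℝ))
          (fun t ht => add_le_add
            (mul_le_mul_of_nonneg_left (Δvdc_le m ht.1) (by linarith))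
            (mul_le_mul_of_nonneg_left (Δvdc_le (m+1) ht.1) (by linarith))),
        ih m hlt (a+b/2) (b/2) (by linarith) (by linarith),
        Msup_even m, Msup_odd_of m (ih m hlt 1 1 zero_le_one zero_le_one)]
      ring
    · -- odd case : N'+1 = 2m+1
      have hm' : N' + 1 = 2 * m + 1 := by omega
      rw [hm'] at ih ⊢
      have hlt : m < 2 * m + 1 := by omega
      have h22 : 2 * m + 1 + 1 = 2 * (m + 1) := by ring
      have step1 : (⨆ s : Set.Icc (0:ℝ) 1, (a * Δvdc (2*m+1) s + b * Δvdc (2*m+1+1) s))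
          = ⨆ s : Set.Icc (0:ℝ) 1,
              (((a/2) * Δvdc m s + (a/2+b) * Δvdc (m+1) s) + a/2) := by
        apply sup_reduce (fun t => a * Δvdc (2*m+1) t + b * Δvdc (2*m+1+1) t)
          (fun s => ((a/2) * Δvdc m s + (a/2+b) * Δvdc (m+1) s) + a/2)
          (a * ((2*m+1 : ℕ) : ℝ) + b * ((2*m+1+1 : ℕ) : ℝ))
          (fun t ht => add_le_add
            (mul_le_mul_of_nonneg_left (Δvdc_le (2*m+1) ht.1) ha)
            (mul_le_mul_of_nonneg_left (Δvdc_le (2*m+1+1) ht.1) hb))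
        intro s
        obtain ⟨h0, h1⟩ := s.2
        have e1 : Δvdc (2*m+1) ((s:ℝ)/2) = Δvdc (m+1) (s:ℝ) + (s:ℝ)/2 := by
          rw [Δvdc_odd_lo m (by linarith : (s:ℝ)/2 ≤ 1/2)]; congr 2; ring
        have e2 : Δvdc (2*m+1+1) ((s:ℝ)/2) = Δvdc (m+1) (s:ℝ) := by
          rw [h22, Δvdc_even_lo (m+1) (by linarith : (s:ℝ)/2 ≤ 1/2)]; congr 1; ring
        have e3 : Δvdc (2*m+1) (((s:ℝ)+1)/2) = Δvdc m (s:ℝ) + (1 - (s:ℝ))/2 := by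
          rw [Δvdc_odd_hi m (by linarith : 1/2 ≤ ((s:ℝ)+1)/2)]
          have e : 2 * (((s:ℝ)+1)/2) - 1 = (s:ℝ) := by ring
          rw [e]; ring
        have e4 : Δvdc (2*m+1+1) (((s:ℝ)+1)/2) = Δvdc (m+1) (s:ℝ) := by
          rw [h22, Δvdc_even_hi (m+1) (by linarith : 1/2 ≤ ((s:ℝ)+1)/2)]; congr 1; ring
        rw [e1, e2, e3, e4, Δvdc_succ m (s:ℝ)]
        by_cases hχ : vdc 2 m < (s:ℝ)
        · rw [if_pos hχ, max_eq_left (by nlinarith)]; ring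
        · rw [if_neg hχ, max_eq_right (by nlinarith)]; ring
      rw [step1,
        sup_add_const (fun s => (a/2) * Δvdc m s + (a/2+b) * Δvdc (m+1) s) (a/2)
          ((a/2) * (m : ℝ) + (a/2+b) * ((m+1 : ℕ) : ℝ))
          (fun t ht => add_le_add
            (mul_le_mul_of_nonneg_left (Δvdc_le m ht.1) (by linarith))
            (mul_le_mul_of_nonneg_left (Δvdc_le (m+1) ht.1) (by linarith))),
        ih m hlt (a/2) (a/2+b) (by linarith) (by linarith),
        Msup_odd_of m (ih m hlt 1 1 zero_le_one zero_le_one), h22, Msup_even (m+1)]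
      ring

lemma Msup_one : Msup 1 = 1 := by
  unfold Msup
  have bdd : BddAbove (Set.range fun s : Set.Icc (0:ℝ) 1 => Δvdc 1 s) := by
    apply bddI (Δvdc 1) 1
    intro t ht
    rw [Δvdc_one]
    split_ifs <;> linarith [ht.1]
  apply le_antisymm
  · apply ciSup_le
    intro s
    rw [Δvdc_one]
    split_ifs <;> linarith [s.2.1]
  · apply le_of_forall_pos_le_add
    intro ε hε
    have hm : min ε 1 ∈ Set.Icc (0:ℝ) 1 :=
      ⟨le_of_lt (lt_min hε one_pos), min_le_right _ _⟩
    have h1 := le_ciSup bdd (⟨min ε 1, hm⟩ : Set.Icc (0:ℝ) 1)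
    have h2 : Δvdc 1 (min ε 1) = 1 - min ε 1 := by
      rw [Δvdc_one, if_pos (lt_min hε one_pos)]
    have h3 : min ε 1 ≤ ε := min_le_left _ _
    simp only at h1
    rw [h2] at h1
    linarith

lemma Dvdc_eq_Msup (N : ℕ) (h : 1 ≤ N) : Dvdc N = Msup N := by
  have hN : (0:ℝ) < (N : ℝ) := by exact_mod_cast h
  unfold Dvdc dstar Msup
  rw [Real.mul_iSup_of_nonneg hN.le]
  apply iSup_congr
  intro t
  show (N : ℝ) * |(AcntN N t : ℝ) / N - t| = Δvdc N t
  have e1 : (N : ℝ) * |(AcntN N t : ℝ) / N - t| = |(AcntN N t : ℝ) - N * t| := by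
    rw [← abs_of_pos hN, ← abs_mul]
    congr 1
    field_simp
    rw [abs_of_pos hN]
  rw [e1]
  exact abs_of_nonneg (Δvdc_nonneg N t t.2)

/-- The generating recursion for the star discrepancy of the binary van der Corput
sequence: `D(1) = 1`, `D(2N) = D(N)` and `D(2N+1) = (D(N) + D(N+1) + 1) / 2`. -/
theorem vdc_star_discrepancy_recursion :
    Dvdc 1 = 1 ∧
    ∀ N : ℕ, 1 ≤ N →
      Dvdc (2 * N) = Dvdc N ∧
      Dvdc (2 * N + 1) = (Dvdc N + Dvdc (N + 1) + 1) / 2 := by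
  constructor
  · rw [Dvdc_eq_Msup 1 le_rfl, Msup_one]
  · intro N hN
    constructor
    · rw [Dvdc_eq_Msup (2*N) (by omega), Dvdc_eq_Msup N hN, Msup_even]
    · rw [Dvdc_eq_Msup (2*N+1) (by omega), Dvdc_eq_Msup N hN,
        Dvdc_eq_Msup (N+1) (by omega),
        Msup_odd_of N (masterL N 1 1 zero_le_one zero_le_one)]
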